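/- Let (R, m) be a Noetherian local ring, let F = Rᵐ be a finitely generated free R-module, L ⊆ F a submodule, and J an ideal of R with J·F ⊆ L. Let h be a non-negative integer such that: (i) for every ideal I of R and every n ≥ h, Iⁿ ∩ J = I^{n−h}(I^h ∩ J); and (ii) for every ideal I of R and every n ≥ h, IⁿF ∩ L ⊆ I^{n−h}(I^hF ∩ L) + J·F. Then for every ideal I of R and every n ≥ h one has IⁿF ∩ L = I^{n−h}(I^hF ∩ L). -/
import Mathlib

/-- In the free module `Rᵐ`, an element lies in `I • ⊤` iff all its coordinates lie in `I`. -/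
lemma mem_smul_top_iff_pi {R : Type*} [CommRing R] {m : ℕ} (I : Ideal R)
    (x : Fin m → R) : x ∈ I • (⊤ : Submodule R (Fin m → R)) ↔ ∀ j, x j ∈ I := by
  constructor
  · intro hx j
    refine Submodule.smul_induction_on hx ?_ ?_
    · intro r hr f _
      simpa using I.mul_mem_right (f j) hr
    · intro a b ha hb
      simpa using I.add_mem ha hb
  · intro hx
    have : x = ∑ j, (x j) • (Pi.single j (1 : R) : Fin m → R) := by
      funext k
      simp [Finset.sum_apply, Pi.single_apply, Finset.sum_ite_eq']
    rw [this]
    exact Submodule.sum_mem _ fun j _ =>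
      Submodule.smul_mem_smul (hx j) (Submodule.mem_top)

/-- Proposition 2.11 (core argument): if `h` is a strong Artin–Rees number for `(J, R)` and
for the pair `(L/JF, F/JF)` (expressed by inclusion (ii)), where `F = Rᵐ` is free and
`JF ⊆ L`, then `h` is a strong Artin–Rees number for `(L, F)`. -/
theorem stmt9 (R : Type*) [CommRing R] [IsNoetherianRing R] [IsLocalRing R]
    (m : ℕ) (L : Submodule R (Fin m → R)) (J : Ideal R)
    (hJL : J • (⊤ : Submodule R (Fin m → R)) ≤ L) (h : ℕ)
    (hi : ∀ I : Ideal R, ∀ n : ℕ, h ≤ n → I ^ n ⊓ J = I ^ (n - h) * (I ^ h ⊓ J))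
    (hii : ∀ I : Ideal R, ∀ n : ℕ, h ≤ n →
      I ^ n • (⊤ : Submodule R (Fin m → R)) ⊓ L ≤
        I ^ (n - h) • (I ^ h • (⊤ : Submodule R (Fin m → R)) ⊓ L) +
          J • (⊤ : Submodule R (Fin m → R))) :
    ∀ I : Ideal R, ∀ n : ℕ, h ≤ n →
      I ^ n • (⊤ : Submodule R (Fin m → R)) ⊓ L =
        I ^ (n - h) • (I ^ h • (⊤ : Submodule R (Fin m → R)) ⊓ L) := by
  intro I n hn
  set F : Submodule R (Fin m → R) := ⊤
  set A : Submodule R (Fin m → R) := I ^ (n - h) • (I ^ h • F ⊓ L) with hA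
  have hpow : I ^ (n - h) * I ^ h = I ^ n := by
    rw [← pow_add, Nat.sub_add_cancel hn]
  -- A ≤ Iⁿ • F
  have hAIn : A ≤ I ^ n • F := by
    calc A ≤ I ^ (n - h) • (I ^ h • F) :=
          smul_mono_right _ inf_le_left
      _ = I ^ n • F := by rw [← Submodule.smul_assoc, smul_eq_mul, hpow]
  -- A ≤ L
  have hAL : A ≤ L :=
    le_trans (smul_mono_right _ inf_le_right) (Submodule.smul_le_right)
  refine le_antisymm ?_ (le_inf hAIn hAL)
  -- forward inclusion
  have step1 : I ^ n • F ⊓ L ≤ (A + J • F) ⊓ (I ^ n • F) :=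
    le_inf (hii I n hn) inf_le_left
  have modular : (A + J • F) ⊓ (I ^ n • F) = A + (J • F ⊓ I ^ n • F) :=
    sup_inf_assoc_of_le _ hAIn
  -- intersection of smul-tops is smul-top of intersection
  have hinter : J • F ⊓ I ^ n • F ≤ (I ^ n ⊓ J) • F := by
    intro x hx
    rw [mem_smul_top_iff_pi]
    intro j
    exact ⟨(mem_smul_top_iff_pi _ _).mp hx.2 j, (mem_smul_top_iff_pi _ _).mp hx.1 j⟩
  have hfinal : (I ^ n ⊓ J) • F ≤ A := by
    rw [hi I n hn, ← smul_eq_mul, Submodule.smul_assoc]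
    refine smul_mono_right _ ?_
    have h1 : (I ^ h ⊓ J) • F ≤ I ^ h • F :=
      Submodule.smul_mono inf_le_left le_rfl
    have h2 : (I ^ h ⊓ J) • F ≤ L :=
      le_trans (Submodule.smul_mono inf_le_right le_rfl) hJL
    exact le_inf h1 h2
  calc I ^ n • F ⊓ L ≤ (A + J • F) ⊓ (I ^ n • F) := step1
    _ = A + (J • F ⊓ I ^ n • F) := modular
    _ ≤ A + (I ^ n ⊓ J) • F := by exact sup_le_sup_left hinter A
    _ ≤ A + A := by exact sup_le_sup_left hfinal A
    _ = A := sup_idem A
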